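/- Combinatorial mutation is involutive: if Q := mut_w(P, F; {G_h}) is a combinatorial mutation of a lattice polytope P with respect to width vector w and factor F, then mut_{−w}(Q, F; {w_h(P)}) is a well-defined combinatorial mutation of Q and equals P. -/

import Mathlib

open Set Pointwise

noncomputable section

def pairing {n : ℕ} (w : Fin n → ℤ) (x : Fin n → ℚ) : ℚ :=
  ∑ i, (w i : ℚ) * x i

def IsLatticePt {n : ℕ} (x : Fin n → ℚ) : Prop := ∀ i, ∃ z : ℤ, x i = (z : ℚ)

def IsLatticePolytope {n : ℕ} (P : Set (Fin n → ℚ)) : Prop :=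
  ∃ S : Finset (Fin n → ℚ), (∀ x ∈ S, IsLatticePt x) ∧ P = convexHull ℚ (S : Set (Fin n → ℚ))

def IsPrimitive {n : ℕ} (w : Fin n → ℤ) : Prop := Finset.univ.gcd w = 1

def wSlice {n : ℕ} (w : Fin n → ℤ) (h : ℤ) (P : Set (Fin n → ℚ)) : Set (Fin n → ℚ) :=
  convexHull ℚ {x | x ∈ P ∧ IsLatticePt x ∧ pairing w x = (h : ℚ)}

def mutation {n : ℕ} (w : Fin n → ℤ) (P F : Set (Fin n → ℚ)) (G : ℤ → Set (Fin n → ℚ)) :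
    Set (Fin n → ℚ) :=
  convexHull ℚ ((⋃ h : ℤ, ⋃ _ : h < 0, G h) ∪
    ⋃ h : ℤ, ⋃ _ : 0 ≤ h, (wSlice w h P + (h : ℚ) • F))

def IsMutData {n : ℕ} (w : Fin n → ℤ) (P F : Set (Fin n → ℚ))
    (G : ℤ → Set (Fin n → ℚ)) : Prop :=
  IsLatticePolytope F ∧ F.Nonempty ∧ (∀ x ∈ F, pairing w x = 0) ∧
  ∀ h : ℤ, h < 0 →
    (G h = ∅ ∨ IsLatticePolytope (G h)) ∧
    {v | v ∈ P.extremePoints ℚ ∧ pairing w v = (h : ℚ)} ⊆ G h + (-(h : ℚ)) • F ∧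
    G h + (-(h : ℚ)) • F ⊆ wSlice w h P

def dpair {n : ℕ} (u v : Fin n → ℚ) : ℚ := ∑ i, u i * v i

def dualP {n : ℕ} (P : Set (Fin n → ℚ)) : Set (Fin n → ℚ) := {u | ∀ v ∈ P, -1 ≤ dpair u v}

variable {n : ℕ}

lemma pairing_add (w : Fin n → ℤ) (x y : Fin n → ℚ) :
    pairing w (x + y) = pairing w x + pairing w y := by
  simp [pairing, mul_add, Finset.sum_add_distrib]

lemma pairing_smul (w : Fin n → ℤ) (c : ℚ) (x : Fin n → ℚ) :
    pairing w (c • x) = c * pairing w x := by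
  simp only [pairing, Finset.mul_sum, Pi.smul_apply, smul_eq_mul]
  exact Finset.sum_congr rfl fun i _ => by ring

lemma pairing_neg' (w : Fin n → ℤ) (x : Fin n → ℚ) : pairing (-w) x = - pairing w x := by
  simp [pairing, ← Finset.sum_neg_distrib]

lemma convex_pairing_eq (w : Fin n → ℤ) (c : ℚ) : Convex ℚ {x : Fin n → ℚ | pairing w x = c} := by
  intro x hx y hy a b ha hb hab
  simp only [mem_setOf_eq] at *
  rw [pairing_add, pairing_smul, pairing_smul, hx, hy, ← add_mul, hab, one_mul]

lemma pairing_of_mem_wSlice {w : Fin n → ℤ} {h : ℤ} {P : Set (Fin n → ℚ)} {x : Fin n → ℚ}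
    (hx : x ∈ wSlice w h P) : pairing w x = (h : ℚ) := by
  have : wSlice w h P ⊆ {x : Fin n → ℚ | pairing w x = (h : ℚ)} :=
    convexHull_min (fun y hy => hy.2.2) (convex_pairing_eq w _)
  exact this hx

lemma wSlice_subset {w : Fin n → ℤ} {h : ℤ} {P : Set (Fin n → ℚ)} (hP : Convex ℚ P) :
    wSlice w h P ⊆ P :=
  convexHull_min (fun y hy => hy.1) hP

lemma IsLatticePt.add {x y : Fin n → ℚ} (hx : IsLatticePt x) (hy : IsLatticePt y) :
    IsLatticePt (x + y) := by
  intro i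
  obtain ⟨a, ha⟩ := hx i; obtain ⟨b, hb⟩ := hy i
  exact ⟨a + b, by simp [ha, hb]⟩

lemma IsLatticePt.int_smul {x : Fin n → ℚ} (hx : IsLatticePt x) (k : ℤ) :
    IsLatticePt ((k : ℚ) • x) := by
  intro i
  obtain ⟨a, ha⟩ := hx i
  exact ⟨k * a, by simp [ha]⟩

lemma pairing_int_of_lattice {w : Fin n → ℤ} {x : Fin n → ℚ} (hx : IsLatticePt x) :
    ∃ k : ℤ, pairing w x = (k : ℚ) := by
  choose z hz using hx
  refine ⟨∑ i, w i * z i, ?_⟩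
  rw [pairing]
  push_cast
  exact Finset.sum_congr rfl fun i _ => by rw [hz i]

lemma finite_lattice_of_convexHull (S : Finset (Fin n → ℚ)) :
    {x : Fin n → ℚ | x ∈ convexHull ℚ (S : Set (Fin n → ℚ)) ∧ IsLatticePt x}.Finite := by
  classical
  set C : ℚ := ∑ v ∈ S, ∑ j, |v j| with hC
  have hbox : convexHull ℚ (S : Set (Fin n → ℚ)) ⊆ Set.pi univ (fun _ => Icc (-C) C) := by
    refine convexHull_min ?_ (convex_pi fun i _ => convex_Icc _ _)
    intro v hv i _
    have h1 : |v i| ≤ C := by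
      refine le_trans (Finset.single_le_sum (f := fun j => |v j|)
        (fun j _ => abs_nonneg _) (Finset.mem_univ i)) ?_
      exact Finset.single_le_sum (f := fun v : Fin n → ℚ => ∑ j, |v j|)
        (fun v _ => Finset.sum_nonneg fun j _ => abs_nonneg _) (Finset.mem_coe.1 hv)
    exact abs_le.1 h1
  have hfin : (Set.pi univ (fun _ : Fin n => Icc (-⌈C⌉) ⌈C⌉)).Finite :=
    Set.Finite.pi fun i => finite_Icc _ _
  apply Finite.subset (hfin.image (fun z => fun i => ((z i : ℚ))))
  rintro x ⟨hx, hlat⟩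
  choose z hz using hlat
  refine ⟨z, fun i _ => ?_, by ext i; exact (hz i).symm⟩
  have hb := hbox hx i (mem_univ i)
  rw [hz i] at hb
  constructor
  · have : (-(⌈C⌉ : ℚ)) ≤ (z i : ℚ) := le_trans (neg_le_neg (Int.le_ceil C)) hb.1
    exact_mod_cast this
  · have : (z i : ℚ) ≤ (⌈C⌉ : ℚ) := le_trans hb.2 (Int.le_ceil C)
    exact_mod_cast this

lemma wSlice_isLatticePolytope {w : Fin n → ℤ} {h : ℤ} {P : Set (Fin n → ℚ)}
    (hP : IsLatticePolytope P) : IsLatticePolytope (wSlice w h P) := by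
  obtain ⟨S, hSlat, rfl⟩ := hP
  have hfin : {x : Fin n → ℚ | x ∈ convexHull ℚ (S : Set (Fin n → ℚ)) ∧ IsLatticePt x ∧
      pairing w x = (h : ℚ)}.Finite := by
    apply (finite_lattice_of_convexHull S).subset
    rintro x ⟨h1, h2, _⟩; exact ⟨h1, h2⟩
  refine ⟨hfin.toFinset, fun x hx => ?_, ?_⟩
  · rw [Finite.mem_toFinset] at hx; exact hx.2.1
  · rw [wSlice, Finite.coe_toFinset]


section Mink

variable {E : Type*} [AddCommGroup E] [Module ℚ E] [DecidableEq E]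

lemma mem_extremePoints_of_not_mem_erase (S : Finset E) {s : E} (hs : s ∈ S)
    (h : s ∉ convexHull ℚ ((S.erase s : Finset E) : Set E)) :
    s ∈ (convexHull ℚ (S : Set E)).extremePoints ℚ := by
  refine ⟨subset_convexHull ℚ _ hs, ?_⟩
  intro x₁ hx₁ x₂ hx₂ hseg
  obtain ⟨a, b, ha, hb, hab, habs⟩ := hseg
  rw [Finset.convexHull_eq] at hx₁ hx₂
  obtain ⟨w₁, hw₁0, hw₁1, hw₁c⟩ := hx₁
  obtain ⟨w₂, hw₂0, hw₂1, hw₂c⟩ := hx₂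
  rw [Finset.centerMass_eq_of_sum_1 _ _ hw₁1] at hw₁c
  rw [Finset.centerMass_eq_of_sum_1 _ _ hw₂1] at hw₂c
  set u : E → ℚ := fun y => a * w₁ y + b * w₂ y with hu
  have hu0 : ∀ y ∈ S, 0 ≤ u y := fun y hy =>
    add_nonneg (mul_nonneg ha.le (hw₁0 y hy)) (mul_nonneg hb.le (hw₂0 y hy))
  have hu1 : ∑ y ∈ S, u y = 1 := by
    simp only [hu, Finset.sum_add_distrib, ← Finset.mul_sum, hw₁1, hw₂1, mul_one, hab]
  have hus : s = ∑ y ∈ S, u y • y := by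
    have hcomb : a • x₁ + b • x₂ = ∑ y ∈ S, u y • y := by
      rw [← hw₁c, ← hw₂c]
      simp only [hu, add_smul, mul_smul, Finset.sum_add_distrib, ← Finset.smul_sum, id]
    exact habs.symm.trans hcomb
  have hsum_erase : ∑ y ∈ S.erase s, u y = 1 - u s := by
    have h' := Finset.add_sum_erase S u hs
    linarith [h', hu1]
  have hus_one : u s = 1 := by
    by_contra hne
    have hlt : u s < 1 := lt_of_le_of_ne (by
      calc u s ≤ ∑ y ∈ S, u y := Finset.single_le_sum hu0 hs
      _ = 1 := hu1) hne
    have hpos : 0 < 1 - u s := by linarith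
    have h2 : u s • s + ∑ y ∈ S.erase s, u y • y = s :=
      (Finset.add_sum_erase S (fun y => u y • y) hs).trans hus.symm
    have hthis : ∑ y ∈ S.erase s, u y • y = (1 - u s) • s := by
      rw [sub_smul, one_smul, eq_sub_iff_add_eq, add_comm]
      exact h2
    have hrepr : s = (S.erase s).centerMass u id := by
      rw [Finset.centerMass, hsum_erase]
      simp only [id]
      rw [hthis, inv_smul_smul₀ (ne_of_gt hpos)]
    have hmem : (S.erase s).centerMass u id ∈ convexHull ℚ ((S.erase s : Finset E) : Set E) :=
      Finset.centerMass_mem_convexHull _ (fun y hy => hu0 y (Finset.mem_of_mem_erase hy))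
        (by rw [hsum_erase]; exact hpos) (fun y hy => Finset.mem_coe.2 hy)
    rw [← hrepr] at hmem
    exact h hmem
  have husb : a * w₁ s + b * w₂ s = 1 := hus_one
  have hw1s : w₁ s ≤ 1 := by
    calc w₁ s ≤ ∑ y ∈ S, w₁ y := Finset.single_le_sum hw₁0 hs
    _ = 1 := hw₁1
  have hw2s : w₂ s ≤ 1 := by
    calc w₂ s ≤ ∑ y ∈ S, w₂ y := Finset.single_le_sum hw₂0 hs
    _ = 1 := hw₂1
  have h1' : a * 1 ≤ a * w₁ s := by
    have := mul_le_mul_of_nonneg_left hw2s hb.le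
    nlinarith
  have h2' : b * 1 ≤ b * w₂ s := by
    have := mul_le_mul_of_nonneg_left hw1s ha.le
    nlinarith
  have hw1s' : w₁ s = 1 := le_antisymm hw1s (by linarith [le_of_mul_le_mul_left h1' ha])
  have hw2s' : w₂ s = 1 := le_antisymm hw2s (by linarith [le_of_mul_le_mul_left h2' hb])
  have key : ∀ (wt : E → ℚ), (∀ y ∈ S, 0 ≤ wt y) → ∑ y ∈ S, wt y = 1 → wt s = 1 →
      ∑ y ∈ S, wt y • y = s := by
    intro wt hwt0 hwt1 hwts
    have hsum0 : ∑ y ∈ S.erase s, wt y = 0 := by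
      have h' := Finset.add_sum_erase S wt hs
      rw [hwts] at h'
      linarith [hwt1, h']
    have hzero : ∀ y ∈ S.erase s, wt y = 0 := by
      intro y hy
      have h1 : wt y ≤ ∑ z ∈ S.erase s, wt z :=
        Finset.single_le_sum (fun z hz => hwt0 z (Finset.mem_of_mem_erase hz)) hy
      have h2 : 0 ≤ wt y := hwt0 y (Finset.mem_of_mem_erase hy)
      linarith
    rw [← Finset.add_sum_erase S _ hs, hwts, one_smul,
      Finset.sum_eq_zero (fun y hy => by rw [hzero y hy, zero_smul])]
    exact add_zero s
  exact hw₁c.symm.trans (key w₁ hw₁0 hw₁1 hw1s')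

lemma convexHull_subset_hull_extremePoints (S : Finset E) :
    convexHull ℚ (S : Set E) ⊆
      convexHull ℚ ((convexHull ℚ (S : Set E)).extremePoints ℚ) := by
  induction S using Finset.strongInduction with
  | _ S ih =>
    by_cases hall : ∀ s ∈ S, s ∉ convexHull ℚ ((S.erase s : Finset E) : Set E)
    · refine convexHull_min ?_ (convex_convexHull ℚ _)
      intro s hs
      exact subset_convexHull ℚ _ (mem_extremePoints_of_not_mem_erase S (Finset.mem_coe.1 hs)
        (hall s (Finset.mem_coe.1 hs)))
    · push_neg at hall
      obtain ⟨s, hsS, hsmem⟩ := hall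
      have heq : convexHull ℚ (S : Set E) = convexHull ℚ ((S.erase s : Finset E) : Set E) := by
        apply Subset.antisymm
        · refine convexHull_min ?_ (convex_convexHull ℚ _)
          intro y hy
          rcases eq_or_ne y s with rfl | hne
          · exact hsmem
          · exact subset_convexHull ℚ _ (Finset.mem_coe.2
              (Finset.mem_erase.2 ⟨hne, Finset.mem_coe.1 hy⟩))
        · exact convexHull_mono
            (fun y hy => Finset.mem_coe.2 (Finset.mem_of_mem_erase (Finset.mem_coe.1 hy)))
      rw [heq]
      exact ih (S.erase s) (Finset.erase_ssubset hsS)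


end Mink

variable {n : ℕ}

lemma G_height {w : Fin n → ℤ} {P F : Set (Fin n → ℚ)} {G : ℤ → Set (Fin n → ℚ)}
    (hFne : F.Nonempty) (hF0 : ∀ x ∈ F, pairing w x = 0)
    (hG : ∀ h : ℤ, h < 0 → G h + (-(h : ℚ)) • F ⊆ wSlice w h P)
    {m : ℤ} (hm : m < 0) {g : Fin n → ℚ} (hg : g ∈ G m) : pairing w g = (m : ℚ) := by
  obtain ⟨f₀, hf₀⟩ := hFne
  have hmem : g + (-(m : ℚ)) • f₀ ∈ wSlice w m P :=
    hG m hm (add_mem_add hg (smul_mem_smul_set hf₀))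
  have hp := pairing_of_mem_wSlice hmem
  rwa [pairing_add, pairing_smul, hF0 f₀ hf₀, mul_zero, add_zero] at hp

lemma key_lemma {w : Fin n → ℤ} {P F : Set (Fin n → ℚ)} {G : ℤ → Set (Fin n → ℚ)}
    (hPc : Convex ℚ P) (hFne : F.Nonempty) (hFc : Convex ℚ F)
    (hF0 : ∀ x ∈ F, pairing w x = 0)
    (hG : ∀ h : ℤ, h < 0 → G h + (-(h : ℚ)) • F ⊆ wSlice w h P) :
    ∀ q ∈ mutation w P F G, pairing w q ≤ 0 → ∀ f ∈ F, q + (-(pairing w q)) • f ∈ P := by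
  set R : Set (Fin n → ℚ) := {q | ∃ a b : ℚ, 0 ≤ a ∧ 0 ≤ b ∧ pairing w q = b - a ∧
    ∃ y ∈ b • F, ∀ f ∈ F, q - y + a • f ∈ P} with hR
  have hRconv : Convex ℚ R := by
    rintro x ⟨a₁, b₁, ha₁, hb₁, hp₁, y₁, hy₁, hP₁⟩ z ⟨a₂, b₂, ha₂, hb₂, hp₂, y₂, hy₂, hP₂⟩
      la lb hla hlb hsum
    refine ⟨la * a₁ + lb * a₂, la * b₁ + lb * b₂,
      add_nonneg (mul_nonneg hla ha₁) (mul_nonneg hlb ha₂),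
      add_nonneg (mul_nonneg hla hb₁) (mul_nonneg hlb hb₂), ?_,
      la • y₁ + lb • y₂, ?_, ?_⟩
    · rw [pairing_add, pairing_smul, pairing_smul, hp₁, hp₂]; ring
    · have hsplit : (la * b₁ + lb * b₂) • F = (la * b₁) • F + (lb * b₂) • F :=
        hFc.add_smul (mul_nonneg hla hb₁) (mul_nonneg hlb hb₂)
      rw [hsplit]
      obtain ⟨f₁, hf₁, rfl⟩ := hy₁
      obtain ⟨f₂, hf₂, rfl⟩ := hy₂
      exact add_mem_add (by rw [smul_smul]; exact smul_mem_smul_set hf₁)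
        (by rw [smul_smul]; exact smul_mem_smul_set hf₂)
    · intro f hf
      have e : (la • x + lb • z) - (la • y₁ + lb • y₂) + (la * a₁ + lb * a₂) • f
          = la • (x - y₁ + a₁ • f) + lb • (z - y₂ + a₂ • f) := by
        simp only [smul_add, smul_sub, smul_smul, add_smul]; abel
      rw [e]
      exact hPc (hP₁ f hf) (hP₂ f hf) hla hlb hsum
  have hBR : ((⋃ h : ℤ, ⋃ _ : h < 0, G h) ∪
      ⋃ h : ℤ, ⋃ _ : 0 ≤ h, (wSlice w h P + (h : ℚ) • F)) ⊆ R := by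
    rintro q (hq | hq)
    · simp only [mem_iUnion] at hq
      obtain ⟨h, hneg, hqG⟩ := hq
      have hpq : pairing w q = (h : ℚ) := G_height hFne hF0 hG hneg hqG
      obtain ⟨f₀, hf₀⟩ := hFne
      refine ⟨-(h : ℚ), 0, ?_, le_refl 0, by rw [hpq]; ring, 0, ⟨f₀, hf₀, zero_smul _ _⟩, ?_⟩
      · simp only [Left.nonneg_neg_iff]
        exact_mod_cast hneg.le
      · intro f hf
        rw [sub_zero]
        exact wSlice_subset hPc (hG h hneg (add_mem_add hqG (smul_mem_smul_set hf)))
    · simp only [mem_iUnion] at hq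
      obtain ⟨h, hpos, hq⟩ := hq
      rcases hq with ⟨x, hx, y, hy, rfl⟩
      obtain ⟨f₁, hf₁, rfl⟩ := hy
      refine ⟨0, (h : ℚ), le_refl 0, by exact_mod_cast hpos, ?_, (h : ℚ) • f₁,
        smul_mem_smul_set hf₁, ?_⟩
      · rw [pairing_add, pairing_smul, hF0 f₁ hf₁, mul_zero, add_zero,
          pairing_of_mem_wSlice hx]; ring
      · intro f hf
        have e : x + (h : ℚ) • f₁ - (h : ℚ) • f₁ + (0 : ℚ) • f = x := by
          simp
        rw [e]
        exact wSlice_subset hPc hx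
  intro q hq hq0 f hf
  have hqR : q ∈ R := convexHull_min hBR hRconv hq
  obtain ⟨a, b, ha, hb, hpq, y, hy, hmem⟩ := hqR
  obtain ⟨f₂, hf₂, rfl⟩ := hy
  rcases eq_or_lt_of_le ha with hA | haa
  · have hbq : pairing w q = b := by rw [hpq, ← hA, sub_zero]
    have hb0 : b = 0 := le_antisymm (hbq ▸ hq0) hb
    have hq0' : pairing w q = 0 := by rw [hbq, hb0]
    have hm := hmem f hf
    rw [← hA, hb0] at hm
    simp only [zero_smul, sub_zero, add_zero] at hm
    rw [hq0']
    simpa using hm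
  · have hba : b ≤ a := by
      have h1 : b - a ≤ 0 := hpq ▸ hq0
      linarith
    have hane : a ≠ 0 := ne_of_gt haa
    have hf' : (b / a) • f₂ + ((a - b) / a) • f ∈ F :=
      hFc hf₂ hf (div_nonneg hb haa.le) (div_nonneg (by linarith) haa.le) (by field_simp; ring)
    have hmem' := hmem _ hf'
    have e : q - b • f₂ + a • ((b / a) • f₂ + ((a - b) / a) • f) = q + (a - b) • f := by
      have e1 : a * (b / a) = b := by field_simp
      have e2 : a * ((a - b) / a) = a - b := by field_simp
      rw [smul_add, smul_smul, smul_smul, e1, e2]; abel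
    rw [e] at hmem'
    have hneg : -(pairing w q) = a - b := by rw [hpq]; ring
    rw [hneg]
    exact hmem'


/-- Combinatorial mutation is involutive: if `Q = mut_w(P,F;{G_h})` then
`mut_{-w}(Q,F;{w_h(P)})` is a well-defined combinatorial mutation of `Q` and equals `P`. -/
theorem mutation_involutive {n : ℕ} (w : Fin n → ℤ) (P F : Set (Fin n → ℚ))
    (G : ℤ → Set (Fin n → ℚ)) (hP : IsLatticePolytope P) (hw : IsPrimitive w)
    (hdata : IsMutData w P F G) :
    IsMutData (-w) (mutation w P F G) F (fun h => wSlice w (-h) P) ∧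
      mutation (-w) (mutation w P F G) F (fun h => wSlice w (-h) P) = P := by
  obtain ⟨hFlat, hFne, hF0, hdat⟩ := hdata
  obtain ⟨SP, hSPlat, hPdef⟩ := hP
  have hPc : Convex ℚ P := hPdef ▸ convex_convexHull ℚ _
  have hG : ∀ h : ℤ, h < 0 → G h + (-(h : ℚ)) • F ⊆ wSlice w h P := fun h hh => (hdat h hh).2.2
  have hGv : ∀ h : ℤ, h < 0 →
      {v | v ∈ P.extremePoints ℚ ∧ pairing w v = (h : ℚ)} ⊆ G h + (-(h : ℚ)) • F :=
    fun h hh => (hdat h hh).2.1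
  obtain ⟨SF, hSFlat, hFdef⟩ := hFlat
  have hFc : Convex ℚ F := hFdef ▸ convex_convexHull ℚ _
  set B : Set (Fin n → ℚ) := ((⋃ h : ℤ, ⋃ _ : h < 0, G h) ∪
    ⋃ h : ℤ, ⋃ _ : 0 ≤ h, (wSlice w h P + (h : ℚ) • F)) with hBdef
  have hQB : mutation w P F G = convexHull ℚ B := rfl
  have hQc : Convex ℚ (mutation w P F G) := hQB ▸ convex_convexHull ℚ _
  have hBQ : B ⊆ mutation w P F G := hQB ▸ subset_convexHull ℚ B
  obtain ⟨f₀, hf₀⟩ := id hFne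
  -- elements of positive slices of P pushed by F are in Q
  have hposQ : ∀ k : ℤ, 0 ≤ k → wSlice w k P + (k : ℚ) • F ⊆ mutation w P F G := by
    intro k hk
    refine subset_trans ?_ hBQ
    intro x hx
    exact mem_union_right _ (mem_iUnion.2 ⟨k, mem_iUnion.2 ⟨hk, hx⟩⟩)
  have hGQ : ∀ k : ℤ, k < 0 → G k ⊆ mutation w P F G := by
    intro k hk
    refine subset_trans ?_ hBQ
    intro x hx
    exact mem_union_left _ (mem_iUnion.2 ⟨k, mem_iUnion.2 ⟨hk, hx⟩⟩)
  have hslice0Q : wSlice w 0 P ⊆ mutation w P F G := by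
    intro x hx
    have h1 : x + (0 : ℚ) • f₀ ∈ wSlice w 0 P + ((0 : ℤ) : ℚ) • F := by
      rw [Int.cast_zero]
      exact add_mem_add hx (smul_mem_smul_set hf₀)
    have h2 : x + (0 : ℚ) • f₀ = x := by simp
    rw [h2] at h1
    exact hposQ 0 le_rfl h1
  -- the well-definedness data
  have hwd : IsMutData (-w) (mutation w P F G) F (fun h => wSlice w (-h) P) := by
    refine ⟨⟨SF, hSFlat, hFdef⟩, hFne, fun x hx => by rw [pairing_neg', hF0 x hx, neg_zero],
      fun h hh => ⟨Or.inr (wSlice_isLatticePolytope ⟨SP, hSPlat, hPdef⟩), ?_, ?_⟩⟩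
    · -- extreme points of Q at height h (w.r.t. -w) lie in wSlice w (-h) P + (-h) F
      rintro v ⟨hvQ, hvpair⟩
      have hvB : v ∈ B := by
        rw [hQB] at hvQ
        exact extremePoints_convexHull_subset hvQ
      have hkv : pairing w v = -(h : ℚ) := by
        rw [pairing_neg'] at hvpair; linarith
      rcases hvB with hvB | hvB
      · exfalso
        simp only [mem_iUnion] at hvB
        obtain ⟨m, hm, hvG⟩ := hvB
        have := G_height hFne hF0 hG hm hvG
        rw [this] at hkv
        have hm' : (m : ℚ) < 0 := by exact_mod_cast hm
        have hh' : (0 : ℚ) < -(h : ℚ) := by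
          have : (h : ℚ) < 0 := by exact_mod_cast hh
          linarith
        linarith
      · simp only [mem_iUnion] at hvB
        obtain ⟨m, hm, hvm⟩ := hvB
        obtain ⟨x, hx, y, hy, rfl⟩ := hvm
        obtain ⟨f, hf, rfl⟩ := hy
        have hpx : pairing w (x + (m : ℚ) • f) = (m : ℚ) := by
          rw [pairing_add, pairing_smul, hF0 f hf, mul_zero, add_zero,
            pairing_of_mem_wSlice hx]
        rw [hpx] at hkv
        have hmh : m = -h := by exact_mod_cast hkv
        subst hmh
        have hc : ((-h : ℤ) : ℚ) = -(h : ℚ) := by push_cast; ring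
        rw [hc]
        exact add_mem_add hx (smul_mem_smul_set hf)
    · -- wSlice w (-h) P + (-h) F ⊆ wSlice (-w) h Q
      show wSlice w (-h) P + (-(h : ℚ)) • F ⊆ wSlice (-w) h (mutation w P F G)
      have hc2 : (-(h : ℚ)) • F = convexHull ℚ (((-h : ℤ) : ℚ) • (SF : Set (Fin n → ℚ))) := by
        rw [convexHull_smul, ← hFdef]
        rw [show ((-h : ℤ) : ℚ) = -(h : ℚ) from by push_cast; ring]
      rw [hc2]
      rw [show wSlice w (-h) P = convexHull ℚ
        {x | x ∈ P ∧ IsLatticePt x ∧ pairing w x = ((-h : ℤ) : ℚ)} from rfl]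
      rw [← convexHull_add]
      rw [show wSlice (-w) h (mutation w P F G) = convexHull ℚ
        {x | x ∈ mutation w P F G ∧ IsLatticePt x ∧ pairing (-w) x = (h : ℚ)} from rfl]
      apply convexHull_mono
      rintro q ⟨t, ht, y, hy, rfl⟩
      obtain ⟨fl, hfl, rfl⟩ := hy
      have hflF : fl ∈ F := by
        rw [hFdef]; exact subset_convexHull ℚ _ hfl
      have hflat : IsLatticePt fl := hSFlat fl hfl
      have h1 : t + ((-h : ℤ) : ℚ) • fl ∈ wSlice w (-h) P + ((-h : ℤ) : ℚ) • F := by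
        refine add_mem_add ?_ (smul_mem_smul_set hflF)
        exact subset_convexHull ℚ _ ht
      refine ⟨hposQ (-h) (by omega) h1, ht.2.1.add (hflat.int_smul (-h)), ?_⟩
      rw [pairing_neg', pairing_add, pairing_smul, hF0 fl hflF, mul_zero, add_zero, ht.2.2]
      push_cast; ring
  refine ⟨hwd, ?_⟩
  -- now the equality
  set B' : Set (Fin n → ℚ) := ((⋃ h : ℤ, ⋃ _ : h < 0, wSlice w (-h) P) ∪
    ⋃ h : ℤ, ⋃ _ : 0 ≤ h, (wSlice (-w) h (mutation w P F G) + (h : ℚ) • F)) with hB'def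
  have hQ'B : mutation (-w) (mutation w P F G) F (fun h => wSlice w (-h) P)
      = convexHull ℚ B' := rfl
  apply Subset.antisymm
  · -- mut' ⊆ P
    rw [hQ'B]
    refine convexHull_min ?_ hPc
    rintro q (hq | hq)
    · simp only [mem_iUnion] at hq
      obtain ⟨h, hh, hq⟩ := hq
      exact wSlice_subset hPc hq
    · simp only [mem_iUnion] at hq
      obtain ⟨h, hh, hq⟩ := hq
      obtain ⟨x, hx, y, hy, rfl⟩ := hq
      obtain ⟨f, hf, rfl⟩ := hy
      have hxQ : x ∈ mutation w P F G := wSlice_subset hQc hx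
      have hpx : pairing w x = -(h : ℚ) := by
        have := pairing_of_mem_wSlice hx
        rw [pairing_neg'] at this
        linarith
      have hle : pairing w x ≤ 0 := by
        rw [hpx]
        have : (0 : ℚ) ≤ (h : ℚ) := by exact_mod_cast hh
        linarith
      have := key_lemma hPc hFne hFc hF0 hG x hxQ hle f hf
      rw [hpx, neg_neg] at this
      exact this
  · -- P ⊆ mut'
    have hEP : P.extremePoints ℚ ⊆
        mutation (-w) (mutation w P F G) F (fun h => wSlice w (-h) P) := by
      intro v hv
      have hvS : v ∈ (SP : Set (Fin n → ℚ)) := by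
        rw [hPdef] at hv
        exact extremePoints_convexHull_subset hv
      have hvlat : IsLatticePt v := hSPlat v hvS
      have hvP : v ∈ P := extremePoints_subset hv
      obtain ⟨k, hk⟩ := pairing_int_of_lattice (w := w) hvlat
      rw [hQ'B]
      refine subset_convexHull ℚ B' ?_
      rcases lt_trichotomy k 0 with hk0 | hk0 | hk0
      · -- k < 0 : use the G-data
        have hvmem : v ∈ G k + (-(k : ℚ)) • F := hGv k hk0 ⟨hv, hk⟩
        obtain ⟨g, hg, y, hy, rfl⟩ := hvmem
        have hgQ' : g ∈ wSlice (-w) (-k) (mutation w P F G) := by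
          rcases (hdat k hk0).1 with hGe | ⟨SG, hSGlat, hGdef⟩
          · rw [hGe] at hg; exact absurd hg (notMem_empty g)
          · have hsub : (SG : Set (Fin n → ℚ)) ⊆
                {x | x ∈ mutation w P F G ∧ IsLatticePt x ∧ pairing (-w) x = ((-k : ℤ) : ℚ)} := by
              intro s hs
              have hsG : s ∈ G k := by rw [hGdef]; exact subset_convexHull ℚ _ hs
              refine ⟨hGQ k hk0 hsG, hSGlat s hs, ?_⟩
              rw [pairing_neg', G_height hFne hF0 hG hk0 hsG]
              push_cast; ring
            have : g ∈ convexHull ℚ (SG : Set (Fin n → ℚ)) := by rw [← hGdef]; exact hg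
            exact convexHull_mono hsub this
        refine mem_union_right _ (mem_iUnion.2 ⟨-k, mem_iUnion.2 ⟨by omega, ?_⟩⟩)
        have hc : ((-k : ℤ) : ℚ) = -(k : ℚ) := by push_cast; ring
        rw [hc]
        exact add_mem_add hgQ' hy
      · -- k = 0
        subst hk0
        have hv0 : v ∈ wSlice w 0 P := by
          refine subset_convexHull ℚ _ ?_
          exact ⟨hvP, hvlat, by rw [hk]⟩
        have hvQ : v ∈ mutation w P F G := hslice0Q hv0
        have hvQ0 : v ∈ wSlice (-w) 0 (mutation w P F G) := by
          refine subset_convexHull ℚ _ ?_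
          refine ⟨hvQ, hvlat, ?_⟩
          rw [pairing_neg', hk]
          norm_num
        refine mem_union_right _ (mem_iUnion.2 ⟨0, mem_iUnion.2 ⟨le_rfl, ?_⟩⟩)
        have h2 : v + ((0 : ℤ) : ℚ) • f₀ = v := by simp
        rw [← h2]
        exact add_mem_add hvQ0 (smul_mem_smul_set hf₀)
      · -- k > 0
        refine mem_union_left _ (mem_iUnion.2 ⟨-k, mem_iUnion.2 ⟨by omega, ?_⟩⟩)
        rw [neg_neg]
        refine subset_convexHull ℚ _ ?_
        exact ⟨hvP, hvlat, hk⟩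
    have hPsub : P ⊆ convexHull ℚ (P.extremePoints ℚ) := by
      intro p hp
      rw [hPdef] at hp ⊢
      exact convexHull_subset_hull_extremePoints SP hp
    intro p hp
    have := hPsub hp
    rw [hQ'B]
    refine convexHull_min ?_ (convex_convexHull ℚ B') this
    intro v hv
    have := hEP hv
    rw [hQ'B] at this
    exact this
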